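/- Let p ∈ X be a non-isolated point and let η : X → [0,γ] be a map with all fibers in Δ(X) and with η⁻¹(β) = {p} for some β ≤ γ. (i) If η is a quasi-ordinal decomposition of X, then the singleton {p} is an intersection of a family of clopen subsets of X of cardinality at most the cardinality of [0,γ]. (ii) If η is an ordinal decomposition of X, then p has a neighbourhood base of clopen subsets of X of cardinality at most the cardinality of [0,γ]. -/

import Mathlib

open Set Topology Filter

universe u v

/-- The hyperspace `𝓕(X)` of all nonempty closed subsets of a topological space `X`. -/
structure NEClosed (X : Type u) [TopologicalSpace X] : Type u where
  carrier : Set X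
  nonempty' : carrier.Nonempty
  closed' : IsClosed carrier

namespace NEClosed

variable {X : Type u} [TopologicalSpace X]

/-- The basic Vietoris set `⟨𝒱⟩` determined by a family `𝒱` of subsets of `X`. -/
def basicSet (𝒱 : Set (Set X)) : Set (NEClosed X) :=
  {S | S.carrier ⊆ ⋃₀ 𝒱 ∧ ∀ V ∈ 𝒱, (S.carrier ∩ V).Nonempty}

/-- The Vietoris topology on `𝓕(X)`, generated by the sets `⟨𝒱⟩` where `𝒱` runs over the
finite families of open subsets of `X`. -/
instance : TopologicalSpace (NEClosed X) :=
  TopologicalSpace.generateFrom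
    {t | ∃ 𝒱 : Set (Set X), 𝒱.Finite ∧ (∀ V ∈ 𝒱, IsOpen V) ∧ t = basicSet 𝒱}

/-- The trace of a nonempty closed set `S` on a subspace `A` which it meets, as a nonempty
closed subset of `A`. -/
def trace (S : NEClosed X) (A : Set X) (h : (S.carrier ∩ A).Nonempty) : NEClosed A where
  carrier := Subtype.val ⁻¹' S.carrier
  nonempty' := ⟨⟨h.choose, h.choose_spec.2⟩, h.choose_spec.1⟩
  closed' := S.closed'.preimage continuous_subtype_val

end NEClosed

/-- `f` is a Vietoris continuous selection for `𝓕(X)`. -/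
def IsVSelection {X : Type u} [TopologicalSpace X] (f : NEClosed X → X) : Prop :=
  Continuous f ∧ ∀ S : NEClosed X, f S ∈ S.carrier

/-- `f` is a `p`-maximal selection: `f S = p` whenever `p ∈ S`. -/
def PMaximal {X : Type u} [TopologicalSpace X] (f : NEClosed X → X) (p : X) : Prop :=
  ∀ S : NEClosed X, p ∈ S.carrier → f S = p

/-- `f` is a `p`-minimal selection: `f S ≠ p` whenever `S ≠ {p}`. -/
def PMinimal {X : Type u} [TopologicalSpace X] (f : NEClosed X → X) (p : X) : Prop :=
  ∀ S : NEClosed X, S.carrier ≠ {p} → f S ≠ p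

/-- `H` is clopen modulo the point `p`: `H` is a nonempty closed set, `p ∈ H`, and
`H \ {p}` is open. -/
def ClopenModulo {X : Type u} [TopologicalSpace X] (H : Set X) (p : X) : Prop :=
  H.Nonempty ∧ IsClosed H ∧ p ∈ H ∧ IsOpen (H \ {p})

/-- `Δ(X)`: the family of all nonempty closed subsets of `X` clopen modulo some point. -/
def DeltaSet (X : Type u) [TopologicalSpace X] : Set (Set X) :=
  {H | ∃ p, ClopenModulo H p}

/-- `Δ_ω(X)`: all `H ∈ Δ(X)` such that `H` is clopen, or `H` is clopen modulo a point `q`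
at which `H` (with the subspace topology) has a countable neighbourhood base. -/
def DeltaOmegaSet (X : Type u) [TopologicalSpace X] : Set (Set X) :=
  {H | H ∈ DeltaSet X ∧ (IsClopen H ∨ ∃ q, ∃ hq : q ∈ H,
    ClopenModulo H q ∧ (𝓝 (⟨q, hq⟩ : H)).IsCountablyGenerated)}

/-- The set `[V]_f = {x : f(Vᶜ ∪ {x}) = x}` for an open set `V`. -/
def bracketSel {X : Type u} [TopologicalSpace X] [T1Space X]
    (f : NEClosed X → X) (V : Set X) (hV : IsOpen V) : Set X :=
  {x | f ⟨Vᶜ ∪ {x}, ⟨x, Or.inr rfl⟩, hV.isClosed_compl.union isClosed_singleton⟩ = x}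

/-- The set `⟨V⟩_f = [V]_f ∩ V` for an open set `V`. -/
def angleSel {X : Type u} [TopologicalSpace X] [T1Space X]
    (f : NEClosed X → X) (V : Set X) (hV : IsOpen V) : Set X :=
  bracketSel f V hV ∩ V

/-- A quasi-ordinal decomposition of `X`: a continuous surjection onto a compact ordinal
space `[0, γ]` all of whose fibers are clopen modulo a point. -/
def IsQuasiOrdDecomp {X : Type u} [TopologicalSpace X] (γ : Ordinal.{u})
    (η : X → Set.Iic γ) : Prop :=
  Continuous η ∧ Function.Surjective η ∧ ∀ α : Set.Iic γ, η ⁻¹' {α} ∈ DeltaSet X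

/-- An ordinal decomposition of `X`: a closed quotient map onto a compact ordinal space
`[0, γ]` all of whose fibers are clopen modulo a point. -/
def IsOrdDecomp {X : Type u} [TopologicalSpace X] (γ : Ordinal.{u})
    (η : X → Set.Iic γ) : Prop :=
  IsQuotientMap η ∧ IsClosedMap η ∧ ∀ α : Set.Iic γ, η ⁻¹' {α} ∈ DeltaSet X

/-- If `p` is a non-isolated point and a (quasi-)ordinal decomposition of `X` has `{p}` as a
fiber, then: for a quasi-ordinal decomposition, `{p}` is an intersection of at most `|[0,γ]|`
many clopen sets; for an ordinal decomposition, `p` has a clopen neighbourhood base of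
cardinality at most `|[0,γ]|`. -/

lemma clopen_Ioi' {γ : Ordinal.{u}} (α : Set.Iic γ) : IsClopen (Set.Ioi α) := by
  constructor
  · have hA : α.1 ≤ γ := α.2
    rcases eq_or_lt_of_le hA with h | h
    · convert isClosed_empty
      ext x
      simp only [Set.mem_Ioi, Set.mem_empty_iff_false, iff_false, not_lt]
      exact Subtype.coe_le_coe.mp (le_of_le_of_eq (x.2 : x.1 ≤ γ) h.symm)
    · have : Set.Ioi α = Set.Ici (⟨α.1 + 1, Order.add_one_le_iff.mpr h⟩ : Set.Iic γ) := by
        ext x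
        simp only [Set.mem_Ioi, Set.mem_Ici]
        constructor
        · intro hx
          exact Subtype.coe_le_coe.mp (Order.add_one_le_iff.mpr (Subtype.coe_lt_coe.mpr hx))
        · intro hx
          exact Subtype.coe_lt_coe.mp (Order.add_one_le_iff.mp (Subtype.coe_le_coe.mpr hx))
      rw [this]
      exact isClosed_Ici
  · exact isOpen_Ioi

lemma clopen_Iic' {γ : Ordinal.{u}} (β : Set.Iic γ) : IsClopen (Set.Iic β) := by
  have := (clopen_Ioi' β).compl
  rwa [Set.compl_Ioi] at this


theorem stmt_2 {X : Type u} [TopologicalSpace X] [T2Space X] (γ : Ordinal.{u}) (p : X)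
    (hp : ¬ IsOpen ({p} : Set X))
    (η : X → Set.Iic γ) (hfib : ∀ α : Set.Iic γ, η ⁻¹' {α} ∈ DeltaSet X)
    (β : Set.Iic γ) (hβ : η ⁻¹' {β} = {p}) :
    (IsQuasiOrdDecomp γ η →
      ∃ 𝒞 : Set (Set X), (∀ C ∈ 𝒞, IsClopen C) ∧ ⋂₀ 𝒞 = {p} ∧
        Cardinal.lift.{u + 1} (Cardinal.mk ↥𝒞) ≤ Cardinal.lift.{u} (Cardinal.mk ↥(Set.Iic γ))) ∧
    (IsOrdDecomp γ η →
      ∃ ℬ : Set (Set X), (∀ B ∈ ℬ, IsClopen B ∧ p ∈ B) ∧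
        (∀ V : Set X, IsOpen V → p ∈ V → ∃ B ∈ ℬ, B ⊆ V) ∧
        Cardinal.lift.{u + 1} (Cardinal.mk ↥ℬ) ≤ Cardinal.lift.{u} (Cardinal.mk ↥(Set.Iic γ))) := by
  have hpβ : η p = β := by
    have : p ∈ η ⁻¹' {β} := hβ ▸ rfl
    exact this
  constructor
  · -- quasi-ordinal case
    rintro ⟨hcont, -, -⟩
    refine ⟨Set.range (fun α : Set.Iic γ =>
      η ⁻¹' (Set.Iic β ∩ {x : Set.Iic γ | α < β → α < x})), ?_, ?_, ?_⟩
    · rintro C ⟨α, rfl⟩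
      refine IsClopen.preimage ?_ hcont
      by_cases hα : α < β
      · have : (Set.Iic β ∩ {x : Set.Iic γ | α < β → α < x}) = Set.Iic β ∩ Set.Ioi α := by
          ext x; simp [hα]
        rw [this]
        exact (clopen_Iic' β).inter (clopen_Ioi' α)
      · have : (Set.Iic β ∩ {x : Set.Iic γ | α < β → α < x}) = Set.Iic β := by
          ext x; simp [hα]
        rw [this]
        exact clopen_Iic' β
    · rw [Set.sInter_range]
      ext x
      simp only [Set.mem_iInter, Set.mem_preimage, Set.mem_inter_iff, Set.mem_Iic,
        Set.mem_setOf_eq]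
      constructor
      · intro h
        have hle : η x ≤ β := (h β).1
        have : η x = β := by
          rcases lt_or_eq_of_le hle with hlt | heq
          · exact absurd ((h (η x)).2 hlt) (lt_irrefl _)
          · exact heq
        have : x ∈ η ⁻¹' {β} := this
        rw [hβ] at this
        exact this
      · intro h
        rw [Set.mem_singleton_iff] at h
        subst h
        intro α
        exact ⟨le_of_eq hpβ, fun hα => hpβ ▸ hα⟩
    · exact Cardinal.mk_range_le_lift
  · -- ordinal case
    rintro ⟨hq, hclosed, -⟩
    have hcont : Continuous η := hq.continuous
    -- β cannot be 0
    have hβ0 : β.1 ≠ 0 := by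
      intro h0
      apply hp
      have : ({p} : Set X) = η ⁻¹' (Set.Iic β) := by
        rw [← hβ]
        ext x
        simp only [Set.mem_preimage, Set.mem_singleton_iff, Set.mem_Iic]
        constructor
        · exact le_of_eq
        · intro hx
          have h1 : (η x).1 ≤ β.1 := hx
          have h2 : (η x).1 ≤ 0 := h0 ▸ h1
          exact Subtype.ext (by rw [nonpos_iff_eq_zero.mp h2, h0])
      rw [this]
      exact ((clopen_Iic' β).preimage hcont).isOpen
    refine ⟨(fun α : Set.Iic γ => η ⁻¹' (Set.Ioc α β)) '' {α | α < β}, ?_, ?_, ?_⟩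
    · rintro B ⟨α, hα, rfl⟩
      refine ⟨IsClopen.preimage ?_ hcont, ?_⟩
      · rw [← Set.Ioi_inter_Iic]
        exact (clopen_Ioi' α).inter (clopen_Iic' β)
      · show η p ∈ Set.Ioc α β
        rw [hpβ]
        exact ⟨hα, le_refl _⟩
    · intro V hV hpV
      have hF : IsClosed (η '' Vᶜ) := hclosed _ hV.isClosed_compl
      have hβF : β ∉ η '' Vᶜ := by
        rintro ⟨x, hxV, hx⟩
        have : x ∈ η ⁻¹' {β} := hx
        rw [hβ] at this
        exact hxV (this ▸ hpV)
      have hnhds : (η '' Vᶜ)ᶜ ∈ 𝓝 β := hF.isOpen_compl.mem_nhds hβF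
      have hex : ∃ l, l < β := by
        refine ⟨⟨0, zero_le (a := γ)⟩, ?_⟩
        exact Subtype.coe_lt_coe.mp (pos_iff_ne_zero.mpr hβ0)
      obtain ⟨l, hl, hsub⟩ := exists_Ioc_subset_of_mem_nhds hnhds hex
      refine ⟨η ⁻¹' (Set.Ioc l β), ⟨l, hl, rfl⟩, ?_⟩
      intro x hx
      by_contra hxV
      exact (hsub hx) ⟨x, hxV, rfl⟩
    · calc Cardinal.lift.{u + 1} (Cardinal.mk ↥((fun α : Set.Iic γ => η ⁻¹' (Set.Ioc α β)) '' {α | α < β}))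
          ≤ Cardinal.lift.{u} (Cardinal.mk ↥{α : Set.Iic γ | α < β}) := Cardinal.mk_image_le_lift
        _ ≤ Cardinal.lift.{u} (Cardinal.mk ↥(Set.Iic γ)) := Cardinal.lift_le.mpr (Cardinal.mk_set_le _)
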